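/- Let u : ℝ × ℝ^m → ℝ be smooth, everywhere positive, ℤ^m-periodic in the spatial variable, with ∂_t u = Δ_x u. Set f = −ln u and E(t) = ∫_{[0,1]^m} |∇f(t,x)|²·u(t,x) dx. Then E is differentiable with E'(t) = −2·∫_{[0,1]^m} |D²f(t,x)|²·u(t,x) dx ≤ 0 for every t; in particular the entropy energy E is non-increasing. -/

import Mathlib

open MeasureTheory
open scoped RealInnerProductSpace

noncomputable section

abbrev E (m : ℕ) := EuclideanSpace ℝ (Fin m)

/-- The standard orthonormal basis of `ℝ^m`. -/
def eE (m : ℕ) (a : Fin m) : E m := EuclideanSpace.single a 1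

/-- Second Fréchet derivative as a bilinear form. -/
def D2E (m : ℕ) (g : E m → ℝ) (x X Y : E m) : ℝ := iteratedFDeriv ℝ 2 g x ![X, Y]

/-- The Laplacian `Δg(x) = Σ_a D²g(x)[e_a, e_a]`. -/
def lapE (m : ℕ) (g : E m → ℝ) (x : E m) : ℝ := ∑ a, D2E m g x (eE m a) (eE m a)

/-- The unit cube `[0,1]^m`. -/
def cube (m : ℕ) : Set (E m) := {x | ∀ i, x i ∈ Set.Icc (0 : ℝ) 1}

/-- The vector of `ℤ^m ⊂ ℝ^m` with integer coordinates `k`. -/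
def latt (m : ℕ) (k : Fin m → ℤ) : E m := WithLp.toLp 2 (fun i => (k i : ℝ))

set_option linter.unusedSectionVars false
namespace EnergyAux
variable {m : ℕ}

lemma top_add_one : ((⊤ : ℕ∞) : WithTop ℕ∞) + 1 ≤ ((⊤ : ℕ∞) : WithTop ℕ∞) := by
  norm_num

lemma one_le_top : ((⊤ : ℕ∞) : WithTop ℕ∞) ≠ 0 := by simp

lemma two_le_top : minSmoothness ℝ 2 ≤ ((⊤ : ℕ∞) : WithTop ℕ∞) := by
  simp [minSmoothness_of_isRCLikeNormedField]
  exact WithTop.coe_le_coe.2 le_top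

/-- Directional derivative operator on `ℝ × E m`. -/
def Dd (w : ℝ × E m) (g : ℝ × E m → ℝ) : ℝ × E m → ℝ := fun z => fderiv ℝ g z w

lemma contDiff_Dd (w : ℝ × E m) {g : ℝ × E m → ℝ} (hg : ContDiff ℝ (⊤ : ℕ∞) g) :
    ContDiff ℝ (⊤ : ℕ∞) (Dd w g) :=
  (hg.fderiv_right top_add_one).clm_apply contDiff_const

lemma Dd_diff {g : ℝ × E m → ℝ} (hg : ContDiff ℝ (⊤ : ℕ∞) g) (z : ℝ × E m) :
    DifferentiableAt ℝ g z := (hg.differentiable one_le_top).differentiableAt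

lemma Dd_eq_snd {g : ℝ × E m → ℝ} (hg : ContDiff ℝ (⊤ : ℕ∞) g) (w w' : ℝ × E m)
    (z : ℝ × E m) : Dd w (Dd w' g) z = fderiv ℝ (fderiv ℝ g) z w w' := by
  have hdg : DifferentiableAt ℝ (fderiv ℝ g) z :=
    ((hg.fderiv_right top_add_one).differentiable one_le_top).differentiableAt
  have h : Dd w' g = fun y => fderiv ℝ g y w' := rfl
  rw [Dd, h, fderiv_clm_apply hdg (differentiableAt_const w')]
  simp

lemma Dd_comm {g : ℝ × E m → ℝ} (hg : ContDiff ℝ (⊤ : ℕ∞) g) (w w' : ℝ × E m)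
    (z : ℝ × E m) : Dd w (Dd w' g) z = Dd w' (Dd w g) z := by
  rw [Dd_eq_snd hg, Dd_eq_snd hg]
  exact (hg.contDiffAt.isSymmSndFDerivAt two_le_top).eq w w'

/-- Spatial periodicity. -/
def Pp (g : ℝ × E m → ℝ) : Prop := ∀ (z : ℝ × E m) (k : Fin m → ℤ), g (z.1, z.2 + latt m k) = g z

lemma Pp.prod_eq {g : ℝ × E m → ℝ} (hg : Pp g) (z : ℝ × E m) (k : Fin m → ℤ) :
    g (z + ((0 : ℝ), latt m k)) = g z := by
  rw [show z + ((0 : ℝ), latt m k) = (z.1, z.2 + latt m k) from by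
    rw [Prod.ext_iff]; simp]
  exact hg z k

lemma Pp.dd {g : ℝ × E m → ℝ} (hg : ContDiff ℝ (⊤ : ℕ∞) g) (hp : Pp g) (w : ℝ × E m) :
    Pp (Dd w g) := by
  intro z k
  set c : ℝ × E m := ((0 : ℝ), latt m k) with hc
  have h1 : (fun y : ℝ × E m => g (y + c)) = g := funext fun y => hp.prod_eq y k
  have h2 : HasFDerivAt (fun y : ℝ × E m => g (y + c)) (fderiv ℝ g (z + c)) z := by
    have := (Dd_diff hg (z + c)).hasFDerivAt.comp z
      ((hasFDerivAt_id z).add_const c)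
    simpa [Function.comp_def] using this
  rw [h1] at h2
  have h3 : fderiv ℝ g z = fderiv ℝ g (z + c) := by
    rw [h2.fderiv]
  show Dd w g (z.1, z.2 + latt m k) = Dd w g z
  have h4 : (z.1, z.2 + latt m k) = z + c := by simp [hc, Prod.ext_iff]
  rw [h4]
  show fderiv ℝ g (z + c) w = fderiv ℝ g z w
  rw [h3]


section Slice
variable {m : ℕ}

lemma hasFDerivAt_slice {G : ℝ × E m → ℝ} (hG : ContDiff ℝ (⊤ : ℕ∞) G) (t : ℝ) (x : E m) :
    HasFDerivAt (fun y => G (t, y))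
      ((fderiv ℝ G (t, x)).comp (ContinuousLinearMap.inr ℝ ℝ (E m))) x :=
  (Dd_diff hG (t, x)).hasFDerivAt.comp x (hasFDerivAt_prodMk_right t x)

lemma fderiv_slice {G : ℝ × E m → ℝ} (hG : ContDiff ℝ (⊤ : ℕ∞) G) (t : ℝ) (x : E m)
    (a : Fin m) : fderiv ℝ (fun y => G (t, y)) x (eE m a) = Dd (0, eE m a) G (t, x) := by
  rw [(hasFDerivAt_slice hG t x).fderiv]
  rfl

lemma hasDerivAt_slice {G : ℝ × E m → ℝ} (hG : ContDiff ℝ (⊤ : ℕ∞) G) (t : ℝ) (x : E m) :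
    HasDerivAt (fun s => G (s, x)) (Dd ((1 : ℝ), (0 : E m)) G (t, x)) t := by
  have h := (Dd_diff hG (t, x)).hasFDerivAt.comp_hasDerivAt t
    ((hasDerivAt_id t).prodMk (hasDerivAt_const t x))
  simpa [Function.comp_def, Dd] using h

lemma hasDerivAt_line {G : ℝ × E m → ℝ} {z : ℝ × E m} (hG : DifferentiableAt ℝ G z)
    (w : ℝ × E m) : HasDerivAt (fun s : ℝ => G (z + s • w)) (Dd w G z) 0 := by
  have hφ : HasDerivAt (fun s : ℝ => z + s • w) w 0 := by
    simpa using (((hasDerivAt_id (0 : ℝ)).smul_const w).const_add z)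
  have hG' : HasFDerivAt G (fderiv ℝ G z) (z + (0 : ℝ) • w) := by
    simpa using hG.hasFDerivAt
  have h2 := hG'.comp_hasDerivAt 0 hφ
  simpa [Function.comp_def, Dd] using h2

end Slice

section HeatDefs
variable {m : ℕ}

def UU (u : ℝ → E m → ℝ) : ℝ × E m → ℝ := Function.uncurry u
def wS (m : ℕ) (a : Fin m) : ℝ × E m := ((0 : ℝ), eE m a)
def wT (m : ℕ) : ℝ × E m := ((1 : ℝ), (0 : E m))
def pf (u : ℝ → E m → ℝ) (a : Fin m) : ℝ × E m → ℝ := Dd (wS m a) (UU u)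
def qf (u : ℝ → E m → ℝ) (a b : Fin m) : ℝ × E m → ℝ := Dd (wS m a) (Dd (wS m b) (UU u))
def cf (u : ℝ → E m → ℝ) (a b c : Fin m) : ℝ × E m → ℝ :=
  Dd (wS m a) (Dd (wS m b) (Dd (wS m c) (UU u)))
def Tf (u : ℝ → E m → ℝ) : ℝ × E m → ℝ := Dd (wT m) (UU u)

variable {u : ℝ → E m → ℝ} (hu : ContDiff ℝ (⊤ : ℕ∞) (Function.uncurry u))
include hu

lemma hUU : ContDiff ℝ (⊤ : ℕ∞) (UU u) := hu
lemma contDiff_pf (a : Fin m) : ContDiff ℝ (⊤ : ℕ∞) (pf u a) := contDiff_Dd _ hu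
lemma contDiff_qf (a b : Fin m) : ContDiff ℝ (⊤ : ℕ∞) (qf u a b) :=
  contDiff_Dd _ (contDiff_Dd _ hu)
lemma contDiff_cf (a b c : Fin m) : ContDiff ℝ (⊤ : ℕ∞) (cf u a b c) :=
  contDiff_Dd _ (contDiff_Dd _ (contDiff_Dd _ hu))
lemma contDiff_Tf : ContDiff ℝ (⊤ : ℕ∞) (Tf u) := contDiff_Dd _ hu

lemma qf_symm (a b : Fin m) (z : ℝ × E m) : qf u a b z = qf u b a z :=
  Dd_comm hu _ _ z

lemma cf_symm₁ (a b c : Fin m) (z : ℝ × E m) : cf u a b c z = cf u b a c z :=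
  Dd_comm (contDiff_Dd _ hu) _ _ z

lemma cf_symm₂ (a b c : Fin m) (z : ℝ × E m) : cf u a b c z = cf u a c b z := by
  unfold cf
  have h : Dd (wS m b) (Dd (wS m c) (UU u)) = Dd (wS m c) (Dd (wS m b) (UU u)) :=
    funext fun y => Dd_comm hu _ _ y
  rw [h]

-- fderiv of u t in direction a
lemma R1 (t : ℝ) (x : E m) (a : Fin m) : fderiv ℝ (u t) x (eE m a) = pf u a (t, x) := by
  have : u t = fun y => UU u (t, y) := rfl
  rw [this, fderiv_slice (G := UU u) hu]
  rfl

lemma R2 (t : ℝ) (x : E m) (a b : Fin m) :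
    D2E m (u t) x (eE m a) (eE m b) = qf u a b (t, x) := by
  rw [D2E, iteratedFDeriv_two_apply]
  show fderiv ℝ (fderiv ℝ (u t)) x (eE m a) (eE m b) = _
  have hut : ContDiff ℝ (⊤ : ℕ∞) (u t) := by
    have : u t = fun y => UU u (t, y) := rfl
    rw [this]
    exact hu.comp ((contDiff_const).prodMk contDiff_id)
  have hd : DifferentiableAt ℝ (fderiv ℝ (u t)) x :=
    ((hut.fderiv_right top_add_one).differentiable one_le_top).differentiableAt
  have h1 : fderiv ℝ (fun y => fderiv ℝ (u t) y (eE m b)) x (eE m a)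
      = fderiv ℝ (fderiv ℝ (u t)) x (eE m a) (eE m b) := by
    rw [fderiv_clm_apply hd (differentiableAt_const (eE m b))]
    simp
  rw [← h1]
  have h2 : (fun y => fderiv ℝ (u t) y (eE m b)) = fun y => pf u b (t, y) :=
    funext fun y => R1 hu t y b
  rw [h2]
  have := fderiv_slice (G := pf u b) (contDiff_pf hu b) t x a
  rw [this]
  rfl

end HeatDefs
section Calc
variable {m : ℕ} {u : ℝ → E m → ℝ}

def PP (u : ℝ → E m → ℝ) : ℝ × E m → ℝ := fun z => (∑ a, (pf u a z) ^ 2) / UU u z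

def Wf (u : ℝ → E m → ℝ) (a : Fin m) : ℝ × E m → ℝ := fun z =>
  (2 * ∑ b, qf u a b z * pf u b z) / UU u z
    - (∑ b, (pf u b z) ^ 2) * pf u a z / (UU u z) ^ 2

def QQ (u : ℝ → E m → ℝ) : ℝ × E m → ℝ := fun z =>
  (∑ a, ∑ b, (-(qf u a b z) / UU u z + pf u a z * pf u b z / (UU u z) ^ 2) ^ 2) * UU u z

variable (hu : ContDiff ℝ (⊤ : ℕ∞) (Function.uncurry u)) (hpos : ∀ z, 0 < UU u z)
include hu hpos

lemma UU_ne (z : ℝ × E m) : UU u z ≠ 0 := ne_of_gt (hpos z)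

omit hpos

lemma contDiff_sumsq : ContDiff ℝ (⊤ : ℕ∞) (fun z => ∑ a, (pf u a z) ^ 2) :=
  ContDiff.sum fun a _ => (contDiff_pf hu a).pow 2

include hpos

lemma contDiff_PP : ContDiff ℝ (⊤ : ℕ∞) (PP u) :=
  (contDiff_sumsq hu).div hu fun z => UU_ne hu hpos z

lemma contDiff_Wf (a : Fin m) : ContDiff ℝ (⊤ : ℕ∞) (Wf u a) := by
  refine ContDiff.sub (ContDiff.div ?_ hu fun z => UU_ne hu hpos z)
    (ContDiff.div ?_ (hu.pow 2) fun z => pow_ne_zero 2 (UU_ne hu hpos z))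
  · exact (contDiff_const.mul (ContDiff.sum fun b _ =>
      (contDiff_qf hu a b).mul (contDiff_pf hu b)))
  · exact (contDiff_sumsq hu).mul (contDiff_pf hu a)

omit hpos
lemma pf_line (a : Fin m) (z w : ℝ × E m) :
    HasDerivAt (fun s : ℝ => pf u a (z + s • w)) (Dd w (pf u a) z) 0 :=
  hasDerivAt_line (((contDiff_pf hu a).differentiable one_le_top).differentiableAt) w

lemma qf_line (a b : Fin m) (z w : ℝ × E m) :
    HasDerivAt (fun s : ℝ => qf u a b (z + s • w)) (Dd w (qf u a b) z) 0 :=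
  hasDerivAt_line (((contDiff_qf hu a b).differentiable one_le_top).differentiableAt) w

lemma UU_line (z w : ℝ × E m) :
    HasDerivAt (fun s : ℝ => UU u (z + s • w)) (Dd w (UU u) z) 0 :=
  hasDerivAt_line ((hu.differentiable one_le_top).differentiableAt) w
include hpos

/-- Derivative of `PP` in direction `w`. -/
lemma Dd_PP (z w : ℝ × E m) :
    Dd w (PP u) z = ((∑ a, 2 * pf u a z * Dd w (pf u a) z) * UU u z
      - (∑ a, (pf u a z) ^ 2) * Dd w (UU u) z) / (UU u z) ^ 2 := by
  have hline := hasDerivAt_line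
    (((contDiff_PP hu hpos).differentiable one_le_top).differentiableAt (x := z)) w
  have hnum : HasDerivAt (fun s : ℝ => ∑ a, (pf u a (z + s • w)) ^ 2)
      (∑ a, 2 * pf u a z * Dd w (pf u a) z) 0 := by
    have h := HasDerivAt.fun_sum (fun a (_ : a ∈ Finset.univ) => (pf_line hu a z w).fun_pow 2)
    refine h.congr_deriv ?_
    refine Finset.sum_congr rfl fun a _ => ?_
    simp
  have h2 : HasDerivAt (fun s : ℝ => PP u (z + s • w))
      (((∑ a, 2 * pf u a z * Dd w (pf u a) z) * UU u (z + (0:ℝ) • w)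
        - (∑ a, (pf u a (z + (0:ℝ) • w)) ^ 2) * Dd w (UU u) z) / (UU u (z + (0:ℝ) • w)) ^ 2)
      0 := by
    exact hnum.div (UU_line hu z w) (UU_ne hu hpos _)
  have h3 := hline.unique h2
  simpa using h3
end Calc
section Calc2
variable {m : ℕ} {u : ℝ → E m → ℝ}
variable (hu : ContDiff ℝ (⊤ : ℕ∞) (Function.uncurry u)) (hpos : ∀ z, 0 < UU u z)
include hu

lemma sumsq_line (z w : ℝ × E m) :
    HasDerivAt (fun s : ℝ => ∑ a, (pf u a (z + s • w)) ^ 2)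
      (∑ a, 2 * pf u a z * Dd w (pf u a) z) 0 := by
  have h := HasDerivAt.fun_sum (fun a (_ : a ∈ Finset.univ) => (pf_line hu a z w).fun_pow 2)
  refine h.congr_deriv ?_
  refine Finset.sum_congr rfl fun a _ => ?_
  simp

include hpos

lemma Dd_Wf (a c : Fin m) (z : ℝ × E m) :
    Dd (wS m c) (Wf u a) z =
      2 * (∑ b, cf u c a b z * pf u b z) / UU u z
      + 2 * (∑ b, qf u a b z * qf u c b z) / UU u z
      - 2 * (∑ b, qf u a b z * pf u b z) * pf u c z / (UU u z) ^ 2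
      - (∑ b, 2 * pf u b z * qf u c b z) * pf u a z / (UU u z) ^ 2
      - (∑ b, (pf u b z) ^ 2) * qf u c a z / (UU u z) ^ 2
      + 2 * (∑ b, (pf u b z) ^ 2) * pf u a z * pf u c z / (UU u z) ^ 3 := by
  set w := wS m c with hw
  have hline := hasDerivAt_line
    (((contDiff_Wf hu hpos a).differentiable one_le_top).differentiableAt (x := z)) w
  have hn1 : HasDerivAt (fun s : ℝ => 2 * ∑ b, qf u a b (z + s • w) * pf u b (z + s • w))
      (2 * ∑ b, (Dd w (qf u a b) z * pf u b z + qf u a b z * Dd w (pf u b) z)) 0 := by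
    have h := (HasDerivAt.fun_sum (fun b (_ : b ∈ Finset.univ) =>
      (qf_line hu a b z w).fun_mul (pf_line hu b z w))).const_mul (2 : ℝ)
    refine h.congr_deriv ?_
    simp
  have ht1 := hn1.fun_div (UU_line hu z w) (UU_ne hu hpos _)
  have ht2 := ((sumsq_line hu z w).fun_mul (pf_line hu a z w)).fun_div
    ((UU_line hu z w).fun_pow 2) (pow_ne_zero 2 (UU_ne hu hpos _))
  have h2 := ht1.fun_sub ht2
  have h3 := hline.unique h2
  simp only [zero_smul, add_zero] at h3
  rw [h3]
  simp only [show ∀ b : Fin m, Dd w (qf u a b) = cf u c a b from fun _ => rfl,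
    show ∀ b : Fin m, Dd w (pf u b) = qf u c b from fun _ => rfl,
    show Dd w (UU u) = pf u c from rfl]
  rw [Finset.sum_add_distrib]
  have hne := UU_ne hu hpos z
  field_simp
  ring
end Calc2
section Calc3
variable {m : ℕ} {u : ℝ → E m → ℝ}
variable (hu : ContDiff ℝ (⊤ : ℕ∞) (Function.uncurry u)) (hpos : ∀ z, 0 < UU u z)
include hu

lemma Tf_apply (t : ℝ) (x : E m) : Tf u (t, x) = deriv (fun s => u s x) t := by
  have h := (hasDerivAt_slice (G := UU u) hu t x).deriv
  exact h.symm

lemma heatF (hheat : ∀ t x, deriv (fun s => u s x) t = lapE m (u t) x) :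
    Tf u = fun z => ∑ b, qf u b b z := by
  funext z
  obtain ⟨t, x⟩ := z
  rw [Tf_apply hu, hheat t x, lapE]
  exact Finset.sum_congr rfl fun b _ => R2 hu t x b b

omit hu in
lemma Dd_sum {G : Fin m → ℝ × E m → ℝ} (hG : ∀ b, ContDiff ℝ (⊤ : ℕ∞) (G b))
    (w z : ℝ × E m) : Dd w (fun y => ∑ b, G b y) z = ∑ b, Dd w (G b) z := by
  refine HasDerivAt.unique (hasDerivAt_line ?_ w) (HasDerivAt.fun_sum fun b _ =>
    hasDerivAt_line (((hG b).differentiable one_le_top).differentiableAt) w)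
  exact DifferentiableAt.fun_sum fun b _ => ((hG b).differentiable one_le_top).differentiableAt

lemma dS_Tf (hheat : ∀ t x, deriv (fun s => u s x) t = lapE m (u t) x) (a : Fin m)
    (z : ℝ × E m) : Dd (wS m a) (Tf u) z = ∑ b, cf u a b b z := by
  rw [heatF hu hheat, Dd_sum (fun b => contDiff_qf hu b b)]
  rfl

lemma key_swap (z : ℝ × E m) :
    ∑ a, ∑ b, cf u a a b z * pf u b z = ∑ a, pf u a z * ∑ b, cf u a b b z := by
  have h1 : ∀ a b : Fin m, cf u a a b z = cf u b a a z := fun a b => by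
    rw [cf_symm₂ hu, cf_symm₁ hu]
  calc ∑ a, ∑ b, cf u a a b z * pf u b z
      = ∑ a, ∑ b, cf u b a a z * pf u b z :=
        Finset.sum_congr rfl fun a _ => Finset.sum_congr rfl fun b _ => by rw [h1]
    _ = ∑ b, ∑ a, cf u b a a z * pf u b z := Finset.sum_comm
    _ = ∑ b, pf u b z * ∑ a, cf u b a a z := by
        refine Finset.sum_congr rfl fun b _ => ?_
        rw [Finset.mul_sum]
        exact Finset.sum_congr rfl fun a _ => by ring

include hpos

lemma dT_PP_final (hheat : ∀ t x, deriv (fun s => u s x) t = lapE m (u t) x) (z : ℝ × E m) :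
    Dd (wT m) (PP u) z =
      2 * (∑ a, ∑ b, cf u a a b z * pf u b z) / UU u z
      - (∑ a, (pf u a z) ^ 2) * (∑ b, qf u b b z) / (UU u z) ^ 2 := by
  rw [Dd_PP hu hpos]
  have h1 : ∀ a : Fin m, Dd (wT m) (pf u a) z = ∑ b, cf u a b b z := fun a => by
    rw [show Dd (wT m) (pf u a) z = Dd (wS m a) (Tf u) z from Dd_comm hu _ _ z]
    exact dS_Tf hu hheat a z
  have h2 : Dd (wT m) (UU u) z = ∑ b, qf u b b z := by
    rw [show Dd (wT m) (UU u) = Tf u from rfl, heatF hu hheat]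
  rw [h2, Finset.sum_congr rfl (fun a (_ : a ∈ Finset.univ) => by rw [h1 a] :
    ∀ a ∈ Finset.univ, 2 * pf u a z * Dd (wT m) (pf u a) z
      = 2 * pf u a z * ∑ b, cf u a b b z)]
  rw [show (∑ a, 2 * pf u a z * ∑ b, cf u a b b z)
      = 2 * ∑ a, pf u a z * ∑ b, cf u a b b z from by
    rw [Finset.mul_sum]; exact Finset.sum_congr rfl fun a _ => by ring]
  rw [← key_swap hu]
  have hne := UU_ne hu hpos z
  field_simp

lemma QQ_eq (z : ℝ × E m) :
    QQ u z = (∑ a, ∑ b, (qf u a b z) ^ 2) / UU u z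
      - 2 * (∑ a, ∑ b, qf u a b z * pf u a z * pf u b z) / (UU u z) ^ 2
      + (∑ a, (pf u a z) ^ 2) ^ 2 / (UU u z) ^ 3 := by
  have hne := UU_ne hu hpos z
  rw [QQ]
  have expand : ∀ a b : Fin m,
      (-(qf u a b z) / UU u z + pf u a z * pf u b z / (UU u z) ^ 2) ^ 2
      = (qf u a b z) ^ 2 / (UU u z) ^ 2
        - 2 * (qf u a b z * pf u a z * pf u b z) / (UU u z) ^ 3
        + (pf u a z) ^ 2 * (pf u b z) ^ 2 / (UU u z) ^ 4 := fun a b => by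
    field_simp; ring
  rw [Finset.sum_congr rfl fun a (_ : a ∈ Finset.univ) =>
    Finset.sum_congr rfl fun b (_ : b ∈ Finset.univ) => expand a b]
  simp only [Finset.sum_add_distrib, Finset.sum_sub_distrib, ← Finset.sum_div]
  have hA2 : (∑ a, (pf u a z) ^ 2) ^ 2 = ∑ a, ∑ b, (pf u a z) ^ 2 * (pf u b z) ^ 2 := by
    rw [sq, Finset.sum_mul_sum]
  have hK : ∑ a, ∑ b, 2 * (qf u a b z * pf u a z * pf u b z)
      = 2 * ∑ a, ∑ b, qf u a b z * pf u a z * pf u b z := by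
    simp [Finset.mul_sum]
  rw [hA2, hK]
  field_simp

lemma sumWf (z : ℝ × E m) :
    ∑ a, Dd (wS m a) (Wf u a) z =
      2 * (∑ a, ∑ b, cf u a a b z * pf u b z) / UU u z
      + 2 * (∑ a, ∑ b, (qf u a b z) ^ 2) / UU u z
      - 4 * (∑ a, ∑ b, qf u a b z * pf u a z * pf u b z) / (UU u z) ^ 2
      - (∑ a, (pf u a z) ^ 2) * (∑ b, qf u b b z) / (UU u z) ^ 2
      + 2 * (∑ a, (pf u a z) ^ 2) ^ 2 / (UU u z) ^ 3 := by
  have hne := UU_ne hu hpos z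
  rw [Finset.sum_congr rfl fun a (_ : a ∈ Finset.univ) => Dd_Wf hu hpos a a z]
  simp only [Finset.sum_add_distrib, Finset.sum_sub_distrib]
  have e1 : ∑ a, (2 * ∑ b, cf u a a b z * pf u b z) / UU u z
      = 2 * (∑ a, ∑ b, cf u a a b z * pf u b z) / UU u z := by
    rw [← Finset.sum_div, ← Finset.mul_sum]
  have e2 : ∑ a, (2 * ∑ b, qf u a b z * qf u a b z) / UU u z
      = 2 * (∑ a, ∑ b, (qf u a b z) ^ 2) / UU u z := by
    rw [← Finset.sum_div, ← Finset.mul_sum]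
    congr 2
    exact Finset.sum_congr rfl fun a _ => Finset.sum_congr rfl fun b _ => (sq _).symm
  have p3 : ∀ a : Fin m, (2 * ∑ b, qf u a b z * pf u b z) * pf u a z
      = 2 * ∑ b, qf u a b z * pf u a z * pf u b z := fun a => by
    rw [mul_assoc, Finset.sum_mul, Finset.mul_sum, Finset.mul_sum]
    exact Finset.sum_congr rfl fun b _ => by ring
  have e3 : ∑ a, (2 * ∑ b, qf u a b z * pf u b z) * pf u a z / (UU u z) ^ 2
      = 2 * (∑ a, ∑ b, qf u a b z * pf u a z * pf u b z) / (UU u z) ^ 2 := by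
    rw [Finset.sum_congr rfl fun a (_ : a ∈ Finset.univ) => by rw [p3 a],
      ← Finset.sum_div, ← Finset.mul_sum]
  have p4 : ∀ a : Fin m, (∑ b, 2 * pf u b z * qf u a b z) * pf u a z
      = 2 * ∑ b, qf u a b z * pf u a z * pf u b z := fun a => by
    rw [Finset.sum_mul, Finset.mul_sum]
    exact Finset.sum_congr rfl fun b _ => by ring
  have e4 : ∑ a, (∑ b, 2 * pf u b z * qf u a b z) * pf u a z / (UU u z) ^ 2
      = 2 * (∑ a, ∑ b, qf u a b z * pf u a z * pf u b z) / (UU u z) ^ 2 := by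
    rw [Finset.sum_congr rfl fun a (_ : a ∈ Finset.univ) => by rw [p4 a],
      ← Finset.sum_div, ← Finset.mul_sum]
  have e5 : ∑ a, (∑ b, (pf u b z) ^ 2) * qf u a a z / (UU u z) ^ 2
      = (∑ a, (pf u a z) ^ 2) * (∑ b, qf u b b z) / (UU u z) ^ 2 := by
    rw [← Finset.sum_div, ← Finset.mul_sum]
  have p6 : ∀ a : Fin m, 2 * (∑ b, (pf u b z) ^ 2) * pf u a z * pf u a z
      = (2 * ∑ b, (pf u b z) ^ 2) * (pf u a z) ^ 2 := fun a => by ring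
  have e6 : ∑ a, 2 * (∑ b, (pf u b z) ^ 2) * pf u a z * pf u a z / (UU u z) ^ 3
      = 2 * (∑ a, (pf u a z) ^ 2) ^ 2 / (UU u z) ^ 3 := by
    rw [Finset.sum_congr rfl fun a (_ : a ∈ Finset.univ) => by rw [p6 a],
      ← Finset.sum_div, ← Finset.mul_sum, sq (∑ a, (pf u a z) ^ 2)]
    ring
  rw [e1, e2, e3, e4, e5, e6]
  ring

lemma master (hheat : ∀ t x, deriv (fun s => u s x) t = lapE m (u t) x) (z : ℝ × E m) :
    Dd (wT m) (PP u) z = (∑ a, Dd (wS m a) (Wf u a) z) - 2 * QQ u z := by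
  rw [dT_PP_final hu hpos hheat, sumWf hu hpos, QQ_eq hu hpos]
  ring

end Calc3
section Bridge
variable {m : ℕ} {u : ℝ → E m → ℝ}
variable (hu : ContDiff ℝ (⊤ : ℕ∞) (Function.uncurry u)) (hpos : ∀ z : ℝ × E m, 0 < UU u z)
include hu

lemma contDiff_ut (t : ℝ) : ContDiff ℝ (⊤ : ℕ∞) (u t) := by
  have : u t = fun y => UU u (t, y) := rfl
  rw [this]
  exact hu.comp (contDiff_const.prodMk contDiff_id)

include hpos

lemma contDiff_ft (t : ℝ) : ContDiff ℝ (⊤ : ℕ∞) (fun y => -Real.log (u t y)) :=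
  (((contDiff_ut hu t).log) fun x => ne_of_gt (hpos (t, x))).neg

lemma fderiv_ft (t : ℝ) (x : E m) (a : Fin m) :
    fderiv ℝ (fun y => -Real.log (u t y)) x (eE m a) = -(pf u a (t, x)) / UU u (t, x) := by
  have hlog : HasDerivAt Real.log (u t x)⁻¹ (u t x) :=
    Real.hasDerivAt_log (ne_of_gt (hpos (t, x)))
  have h1 : HasFDerivAt (fun y => Real.log (u t y)) ((u t x)⁻¹ • fderiv ℝ (u t) x) x :=
    hlog.comp_hasFDerivAt x
      (((contDiff_ut hu t).differentiable one_le_top).differentiableAt).hasFDerivAt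
  have h2 := h1.fun_neg
  rw [h2.fderiv]
  have := R1 hu t x a
  simp only [ContinuousLinearMap.neg_apply, ContinuousLinearMap.smul_apply, this]
  show -((UU u (t, x))⁻¹ * pf u a (t, x)) = _
  field_simp

/-- The function `z ↦ -(∂_b u)/u`. -/
def Gf (u : ℝ → E m → ℝ) (b : Fin m) : ℝ × E m → ℝ := fun z => -(pf u b z) / UU u z

lemma contDiff_Gf (b : Fin m) : ContDiff ℝ (⊤ : ℕ∞) (Gf u b) :=
  ((contDiff_pf hu b).neg).div hu fun z => UU_ne hu hpos z

lemma Dd_Gf (a b : Fin m) (z : ℝ × E m) :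
    Dd (wS m a) (Gf u b) z
      = -(qf u a b z) / UU u z + pf u a z * pf u b z / (UU u z) ^ 2 := by
  set w := wS m a with hw
  have hline := hasDerivAt_line
    (((contDiff_Gf hu hpos b).differentiable one_le_top).differentiableAt (x := z)) w
  have h2 := ((pf_line hu b z w).fun_neg).fun_div (UU_line hu z w) (UU_ne hu hpos _)
  have h3 := hline.unique h2
  simp only [zero_smul, add_zero] at h3
  rw [h3]
  simp only [show Dd w (pf u b) = qf u a b from rfl, show Dd w (UU u) = pf u a from rfl]
  have hne := UU_ne hu hpos z
  field_simp
  ring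

lemma D2f_eq (t : ℝ) (x : E m) (a b : Fin m) :
    D2E m (fun y => -Real.log (u t y)) x (eE m a) (eE m b)
      = -(qf u a b (t, x)) / UU u (t, x)
        + pf u a (t, x) * pf u b (t, x) / (UU u (t, x)) ^ 2 := by
  rw [D2E, iteratedFDeriv_two_apply]
  show fderiv ℝ (fderiv ℝ (fun y => -Real.log (u t y))) x (eE m a) (eE m b) = _
  have hft := contDiff_ft hu hpos t
  have hd : DifferentiableAt ℝ (fderiv ℝ (fun y => -Real.log (u t y))) x :=
    ((hft.fderiv_right top_add_one).differentiable one_le_top).differentiableAt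
  have h1 : fderiv ℝ (fun y => fderiv ℝ (fun y' => -Real.log (u t y')) y (eE m b)) x (eE m a)
      = fderiv ℝ (fderiv ℝ (fun y => -Real.log (u t y))) x (eE m a) (eE m b) := by
    rw [fderiv_clm_apply hd (differentiableAt_const (eE m b))]
    simp
  rw [← h1]
  have h2 : (fun y => fderiv ℝ (fun y' => -Real.log (u t y')) y (eE m b))
      = fun y => Gf u b (t, y) := funext fun y => fderiv_ft hu hpos t y b
  rw [h2, fderiv_slice (G := Gf u b) (contDiff_Gf hu hpos b) t x a]
  exact Dd_Gf hu hpos a b (t, x)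

lemma grad_bridge (t : ℝ) (x : E m) :
    ‖gradient (fun y => -Real.log (u t y)) x‖ ^ 2 * u t x = PP u (t, x) := by
  have hinner : ∀ a : Fin m,
      (gradient (fun y => -Real.log (u t y)) x) a = -(pf u a (t, x)) / UU u (t, x) := by
    intro a
    have h1 : @inner ℝ _ _ (gradient (fun y => -Real.log (u t y)) x) (eE m a)
        = fderiv ℝ (fun y => -Real.log (u t y)) x (eE m a) := by
      rw [gradient]
      exact InnerProductSpace.toDual_symm_apply
    have h2 : @inner ℝ _ _ (gradient (fun y => -Real.log (u t y)) x) (eE m a)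
        = (gradient (fun y => -Real.log (u t y)) x) a := by
      rw [eE, EuclideanSpace.inner_single_right]
      simp
    rw [← h2, h1] at *
    rw [← h2]
    rw [h1, fderiv_ft hu hpos t x a]
  have hnorm : ‖gradient (fun y => -Real.log (u t y)) x‖ ^ 2
      = ∑ a, ((gradient (fun y => -Real.log (u t y)) x) a) ^ 2 := by
    rw [EuclideanSpace.norm_eq, Real.sq_sqrt]
    · exact Finset.sum_congr rfl fun a _ => by rw [Real.norm_eq_abs, sq_abs]
    · exact Finset.sum_nonneg fun a _ => sq_nonneg _
  rw [hnorm, Finset.sum_congr rfl fun a (_ : a ∈ Finset.univ) => by rw [hinner a]]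
  have hne := UU_ne hu hpos (t, x)
  have hux : u t x = UU u (t, x) := rfl
  rw [hux, PP]
  rw [show (∑ a, (-(pf u a (t, x)) / UU u (t, x)) ^ 2)
      = (∑ a, (pf u a (t, x)) ^ 2) / (UU u (t, x)) ^ 2 from by
    rw [Finset.sum_div]
    exact Finset.sum_congr rfl fun a _ => by field_simp]
  field_simp

lemma QQ_bridge (t : ℝ) (x : E m) :
    (∑ a, ∑ b, (D2E m (fun y => -Real.log (u t y)) x (eE m a) (eE m b)) ^ 2) * u t x
      = QQ u (t, x) := by
  rw [QQ]
  have hux : u t x = UU u (t, x) := rfl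
  rw [hux]
  congr 1
  exact Finset.sum_congr rfl fun a _ => Finset.sum_congr rfl fun b _ => by
    rw [D2f_eq hu hpos t x a b]

end Bridge
section Periodic
variable {m : ℕ} {u : ℝ → E m → ℝ}
variable (hu : ContDiff ℝ (⊤ : ℕ∞) (Function.uncurry u))
  (hper : ∀ (t : ℝ) (x : E m) (k : Fin m → ℤ), u t (x + latt m k) = u t x)
include hu hper

lemma Pp_UU : Pp (UU u) := fun z k => hper z.1 z.2 k

lemma Pp_pf (a : Fin m) : Pp (pf u a) := (Pp_UU hu hper).dd hu _

lemma Pp_qf (a b : Fin m) : Pp (qf u a b) :=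
  ((Pp_UU hu hper).dd hu _).dd (contDiff_Dd _ hu) _

lemma Pp_Wf (a : Fin m) : Pp (Wf u a) := by
  intro z k
  have h1 : ∀ b : Fin m, pf u b (z.1, z.2 + latt m k) = pf u b z :=
    fun b => Pp_pf hu hper b z k
  have h2 : ∀ b : Fin m, qf u a b (z.1, z.2 + latt m k) = qf u a b z :=
    fun b => Pp_qf hu hper a b z k
  have h3 : UU u (z.1, z.2 + latt m k) = UU u z := Pp_UU hu hper z k
  simp only [Wf, h1, h2, h3]

lemma Pp_dSWf (hpos : ∀ z : ℝ × E m, 0 < UU u z) (a : Fin m) :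
    Pp (Dd (wS m a) (Wf u a)) :=
  (Pp_Wf hu hper a).dd (contDiff_Wf hu hpos a) _

end Periodic

section Divergence
variable {m : ℕ} {u : ℝ → E m → ℝ}

lemma cube_eq_image (m : ℕ) :
    cube m = (fun y : Fin m → ℝ =>
      ((PiLp.continuousLinearEquiv 2 ℝ (fun _ : Fin m => ℝ)).symm y : E m)) ''
      (Set.Icc 0 1) := by
  ext x
  constructor
  · intro hx
    refine ⟨(PiLp.continuousLinearEquiv 2 ℝ (fun _ : Fin m => ℝ)) x, ?_, by simp⟩
    rw [Set.mem_Icc]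
    constructor <;> intro i
    · exact (hx i).1
    · exact (hx i).2
  · rintro ⟨y, hy, rfl⟩
    rw [Set.mem_Icc] at hy
    intro i
    exact ⟨hy.1 i, hy.2 i⟩

lemma isCompact_cube (m : ℕ) : IsCompact (cube m) := by
  rw [cube_eq_image]
  exact (isCompact_Icc).image
    (PiLp.continuousLinearEquiv 2 ℝ (fun _ : Fin m => ℝ)).symm.continuous

lemma measurableSet_cube (m : ℕ) : MeasurableSet (cube m) :=
  (isCompact_cube m).isClosed.measurableSet

/-- Transfer a set integral over the cube to pi space. -/
lemma integral_cube_eq (g : E m → ℝ) :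
    ∫ x in cube m, g x = ∫ y in Set.Icc (0 : Fin m → ℝ) 1,
      g ((MeasurableEquiv.toLp 2 (Fin m → ℝ)) y) := by
  have mp := (EuclideanSpace.volume_preserving_symm_measurableEquiv_toLp (Fin m)).symm
  have hpre : (MeasurableEquiv.toLp 2 (Fin m → ℝ)) ⁻¹' (cube m)
      = Set.Icc (0 : Fin m → ℝ) 1 := by
    ext y
    simp only [Set.mem_preimage, cube, Set.mem_setOf_eq, Set.mem_Icc]
    constructor
    · intro h
      constructor <;> intro i
      · exact ((by simpa using h i : (y i : ℝ) ∈ Set.Icc (0:ℝ) 1)).1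
      · exact ((by simpa using h i : (y i : ℝ) ∈ Set.Icc (0:ℝ) 1)).2
    · intro ⟨h0, h1⟩ i
      simpa using Set.mem_Icc.2 ⟨h0 i, h1 i⟩
  rw [← hpre]
  exact (mp.setIntegral_preimage_emb
    (MeasurableEquiv.toLp 2 (Fin m → ℝ)).measurableEmbedding g (cube m)).symm

end Divergence
section DivZero
variable {m : ℕ} {u : ℝ → E m → ℝ}
variable (hu : ContDiff ℝ (⊤ : ℕ∞) (Function.uncurry u)) (hpos : ∀ z : ℝ × E m, 0 < UU u z)
  (hper : ∀ (t : ℝ) (x : E m) (k : Fin m → ℤ), u t (x + latt m k) = u t x)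
include hu hpos hper

lemma integral_divW_zero (t : ℝ) :
    ∫ x in cube m, (∑ a, Dd (wS m a) (Wf u a) (t, x)) = 0 := by
  cases m with
  | zero => simp
  | succ n =>
    rw [integral_cube_eq]
    set φ := (PiLp.continuousLinearEquiv 2 ℝ (fun _ : Fin (n + 1) => ℝ)).symm with hφ
    set V : Fin (n + 1) → (Fin (n + 1) → ℝ) → ℝ := fun i y => Wf u i (t, φ y) with hV
    set V' : Fin (n + 1) → (Fin (n + 1) → ℝ) → (Fin (n + 1) → ℝ) →L[ℝ] ℝ := fun i y =>
      ((fderiv ℝ (Wf u i) (t, φ y)).comp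
        (ContinuousLinearMap.inr ℝ ℝ (E (n + 1)))).comp φ.toContinuousLinearMap with hV'
    have hWfc : ∀ i, ContDiff ℝ (⊤ : ℕ∞) (Wf u i) := fun i => contDiff_Wf hu hpos i
    have hcφ : Continuous fun y : Fin (n + 1) → ℝ => ((t, φ y) : ℝ × E (n + 1)) :=
      continuous_const.prodMk (φ.continuous)
    have hVd : ∀ (y : Fin (n + 1) → ℝ) (i : Fin (n + 1)), HasFDerivAt (V i) (V' i y) y := by
      intro y i
      exact (hasFDerivAt_slice (hWfc i) t (φ y)).comp y φ.toContinuousLinearMap.hasFDerivAt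
    have happ : ∀ (i : Fin (n + 1)) (y : Fin (n + 1) → ℝ),
        V' i y (Pi.single i 1) = Dd (wS (n + 1) i) (Wf u i) (t, φ y) := by
      intro i y
      have h1 : φ.toContinuousLinearMap (Pi.single i 1) = eE (n + 1) i := rfl
      simp only [hV', ContinuousLinearMap.comp_apply, h1, ContinuousLinearMap.inr_apply]
      rfl
    have hdiv := integral_divergence_of_hasFDerivAt_off_countable'
      (0 : Fin (n + 1) → ℝ) (1 : Fin (n + 1) → ℝ) (fun i => zero_le_one) V V' ∅
      Set.countable_empty
      (fun i => (((hWfc i).continuous).comp hcφ).continuousOn)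
      (fun y _ i => hVd y i)
      (by
        refine (ContinuousOn.integrableOn_compact isCompact_Icc ?_)
        refine Continuous.continuousOn ?_
        refine continuous_finset_sum _ fun i _ => ?_
        have : (fun y => V' i y (Pi.single i 1))
            = fun y => Dd (wS (n + 1) i) (Wf u i) (t, φ y) := funext fun y => happ i y
        rw [this]
        exact ((contDiff_Dd _ (hWfc i)).continuous).comp hcφ)
    have hfaces : ∀ i : Fin (n + 1),
        ((∫ x in Set.Icc ((0 : Fin (n + 1) → ℝ) ∘ i.succAbove) ((1 : Fin (n + 1) → ℝ) ∘ i.succAbove),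
          V i (i.insertNth ((1 : Fin (n + 1) → ℝ) i) x)) -
          ∫ x in Set.Icc ((0 : Fin (n + 1) → ℝ) ∘ i.succAbove) ((1 : Fin (n + 1) → ℝ) ∘ i.succAbove),
          V i (i.insertNth ((0 : Fin (n + 1) → ℝ) i) x)) = 0 := by
      intro i
      have hins : ∀ x : Fin n → ℝ,
          φ (i.insertNth ((1 : Fin (n + 1) → ℝ) i) x)
            = φ (i.insertNth ((0 : Fin (n + 1) → ℝ) i) x) + latt (n + 1) (Pi.single i 1) := by
        intro x
        ext j
        have h : ∀ (y z : E (n + 1)) (j : Fin (n + 1)), (y + z) j = y j + z j := fun _ _ _ => rfl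
        rw [h]
        have h2 : ∀ (y : Fin (n + 1) → ℝ) (j : Fin (n + 1)), (φ y) j = y j := fun _ _ => rfl
        rw [h2, h2]
        refine Fin.succAboveCases i ?_ ?_ j
        · simp [latt]
        · intro k
          simp [latt, Pi.single_eq_of_ne (Fin.succAbove_ne i k)]
      have hVeq : ∀ x : Fin n → ℝ,
          V i (i.insertNth ((1 : Fin (n + 1) → ℝ) i) x)
            = V i (i.insertNth ((0 : Fin (n + 1) → ℝ) i) x) := by
        intro x
        simp only [hV]
        rw [hins x]
        exact Pp_Wf hu hper i (t, φ (i.insertNth ((0 : Fin (n + 1) → ℝ) i) x)) (Pi.single i 1)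
      rw [show (fun x => V i (i.insertNth ((1 : Fin (n + 1) → ℝ) i) x))
          = (fun x => V i (i.insertNth ((0 : Fin (n + 1) → ℝ) i) x)) from funext hVeq]
      exact sub_self _
    rw [Finset.sum_congr rfl fun i _ => hfaces i, Finset.sum_const_zero] at hdiv
    rw [show (fun y : Fin (n + 1) → ℝ =>
        ∑ a, Dd (wS (n + 1) a) (Wf u a) (t, (MeasurableEquiv.toLp 2 (Fin (n + 1) → ℝ)) y))
        = fun y => ∑ i, V' i y (Pi.single i 1) from funext fun y =>
          Finset.sum_congr rfl fun i _ => (happ i y).symm]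
    exact hdiv
end DivZero
section Deriv
variable {m : ℕ} {u : ℝ → E m → ℝ}
variable (hu : ContDiff ℝ (⊤ : ℕ∞) (Function.uncurry u)) (hpos : ∀ z : ℝ × E m, 0 < UU u z)
include hu hpos

lemma continuous_QQ : Continuous (QQ u) := by
  have hU : Continuous (UU u) := hu.continuous
  have hne : ∀ z, UU u z ≠ 0 := fun z => UU_ne hu hpos z
  refine Continuous.mul ?_ hU
  refine continuous_finset_sum _ fun a _ => continuous_finset_sum _ fun b _ => ?_
  refine Continuous.pow ?_ 2
  exact (((contDiff_qf hu a b).continuous.neg).div hU hne).add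
    ((((contDiff_pf hu a).continuous).mul ((contDiff_pf hu b).continuous)).div
      (hU.pow 2) fun z => pow_ne_zero 2 (hne z))

lemma continuous_divW : Continuous (fun z => ∑ a, Dd (wS m a) (Wf u a) z) :=
  continuous_finset_sum _ fun a _ => (contDiff_Dd _ (contDiff_Wf hu hpos a)).continuous

lemma hasDerivAt_Ent
    (hper : ∀ (t : ℝ) (x : E m) (k : Fin m → ℤ), u t (x + latt m k) = u t x)
    (hheat : ∀ t x, deriv (fun s => u s x) t = lapE m (u t) x) (t₀ : ℝ) :
    HasDerivAt (fun t => ∫ x in cube m, PP u (t, x))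
      (-2 * ∫ x in cube m, QQ u (t₀, x)) t₀ := by
  have hPPc : Continuous (PP u) := (contDiff_PP hu hpos).continuous
  have hdTc : Continuous (Dd (wT m) (PP u)) := (contDiff_Dd _ (contDiff_PP hu hpos)).continuous
  have hKc : IsCompact ((Set.Icc (t₀ - 1) (t₀ + 1)) ×ˢ cube m) :=
    isCompact_Icc.prod (isCompact_cube m)
  obtain ⟨C, hC⟩ := hKc.exists_bound_of_continuousOn hdTc.continuousOn
  have hmk : ∀ t : ℝ, Continuous fun x : E m => ((t, x) : ℝ × E m) := fun t =>
    continuous_const.prodMk continuous_id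
  have key := (hasDerivAt_integral_of_dominated_loc_of_deriv_le
    (F := fun t x => PP u (t, x)) (F' := fun t x => Dd (wT m) (PP u) (t, x))
    (μ := volume.restrict (cube m)) (x₀ := t₀) (bound := fun _ => C) (s := Metric.ball t₀ 1) (Metric.ball_mem_nhds t₀ one_pos)
    (Filter.Eventually.of_forall fun t =>
      ((hPPc.comp (hmk t)).aestronglyMeasurable))
    (((hPPc.comp (hmk t₀)).continuousOn).integrableOn_compact (isCompact_cube m))
    ((hdTc.comp (hmk t₀)).aestronglyMeasurable)
    ?_ ?_ ?_).2
  · have hval : ∫ x in cube m, Dd (wT m) (PP u) (t₀, x)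
        = -2 * ∫ x in cube m, QQ u (t₀, x) := by
      have hmaster : (fun x : E m => Dd (wT m) (PP u) (t₀, x))
          = fun x => (∑ a, Dd (wS m a) (Wf u a) (t₀, x)) - 2 * QQ u (t₀, x) :=
        funext fun x => master hu hpos hheat (t₀, x)
      have hint1 : MeasureTheory.IntegrableOn
          (fun x : E m => ∑ a, Dd (wS m a) (Wf u a) (t₀, x)) (cube m) volume :=
        (((continuous_divW hu hpos).comp (hmk t₀)).continuousOn).integrableOn_compact
          (isCompact_cube m)
      have hint2 : MeasureTheory.IntegrableOn
          (fun x : E m => 2 * QQ u (t₀, x)) (cube m) volume :=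
        ((continuous_const.mul ((continuous_QQ hu hpos).comp (hmk t₀))).continuousOn).integrableOn_compact
          (isCompact_cube m)
      rw [hmaster, integral_sub hint1 hint2, integral_divW_zero hu hpos hper t₀]
      rw [MeasureTheory.integral_const_mul]
      ring
    rw [hval] at key
    exact key
  · refine (MeasureTheory.ae_restrict_iff' (measurableSet_cube m)).2
      (Filter.Eventually.of_forall fun x hx => fun t ht => ?_)
    refine hC (t, x) ⟨?_, hx⟩
    rw [Metric.mem_ball, Real.dist_eq] at ht
    constructor
    · linarith [abs_le.1 ht.le |>.1]
    · linarith [abs_le.1 ht.le |>.2]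
  · exact MeasureTheory.integrableOn_const ((isCompact_cube m).measure_lt_top.ne)
  · exact Filter.Eventually.of_forall fun x => fun t _ =>
      hasDerivAt_slice (contDiff_PP hu hpos) t x

lemma integral_QQ_nonneg (t : ℝ) : 0 ≤ ∫ x in cube m, QQ u (t, x) := by
  refine MeasureTheory.setIntegral_nonneg (measurableSet_cube m) fun x _ => ?_
  refine mul_nonneg ?_ (le_of_lt (hpos (t, x)))
  exact Finset.sum_nonneg fun a _ => Finset.sum_nonneg fun b _ => sq_nonneg _

end Deriv
end EnergyAux


open EnergyAux

/-- for a positive periodic solution of the heat equation the entropy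
energy satisfies `E'(t) = −2∫ |∇²f|² u ≤ 0`; in particular `E` is non-increasing. -/
theorem energy_monotone (m : ℕ) (u : ℝ → E m → ℝ)
    (hu : ContDiff ℝ (⊤ : ℕ∞) (Function.uncurry u)) (hpos : ∀ t x, 0 < u t x)
    (hper : ∀ (t : ℝ) (x : E m) (k : Fin m → ℤ), u t (x + latt m k) = u t x)
    (hheat : ∀ t x, deriv (fun s => u s x) t = lapE m (u t) x)
    (f : ℝ → E m → ℝ) (hf : f = fun t x => -Real.log (u t x))
    (Ent : ℝ → ℝ)
    (hE : Ent = fun t => ∫ x in cube m, ‖gradient (f t) x‖ ^ 2 * u t x) :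
    (∀ t : ℝ,
      HasDerivAt Ent
        (-2 * ∫ x in cube m, (∑ a, ∑ b, (D2E m (f t) x (eE m a) (eE m b)) ^ 2) * u t x) t ∧
      -2 * (∫ x in cube m, (∑ a, ∑ b, (D2E m (f t) x (eE m a) (eE m b)) ^ 2) * u t x) ≤ 0) ∧
    Antitone Ent := by
  have hposU : ∀ z : ℝ × E m, 0 < EnergyAux.UU u z := fun z => hpos z.1 z.2
  have hEnt : Ent = fun t => ∫ x in cube m, EnergyAux.PP u (t, x) := by
    rw [hE]
    funext t
    refine congrArg _ (funext fun x => ?_)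
    rw [hf]
    exact grad_bridge hu hposU t x
  have hval : ∀ t : ℝ,
      (∫ x in cube m, (∑ a, ∑ b, (D2E m (f t) x (eE m a) (eE m b)) ^ 2) * u t x)
        = ∫ x in cube m, EnergyAux.QQ u (t, x) := by
    intro t
    refine congrArg _ (funext fun x => ?_)
    rw [hf]
    exact QQ_bridge hu hposU t x
  have hd : ∀ t : ℝ, HasDerivAt Ent (-2 * ∫ x in cube m, EnergyAux.QQ u (t, x)) t := by
    intro t
    rw [hEnt]
    exact hasDerivAt_Ent hu hposU hper hheat t
  refine ⟨fun t => ⟨?_, ?_⟩, ?_⟩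
  · rw [hval t]
    exact hd t
  · rw [hval t]
    have := integral_QQ_nonneg hu hposU t
    linarith
  · refine antitone_of_deriv_nonpos (fun t => (hd t).differentiableAt) fun t => ?_
    rw [(hd t).deriv]
    have := integral_QQ_nonneg hu hposU t
    linarith
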